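/- Let A, B be n×n real symmetric matrices and f : ℝⁿ → ℝ symmetric strictly Schur-convex, F(X) = f(λ(X)). If X̄ is a global maximizer of F(X − A) over {X symmetric : λ(X) = λ(B)}, then λ(X̄ − A) = λ(X̄) + λ(−A), i.e., −A and X̄ strongly commute. -/

import Mathlib

open Finset

/-- Decreasing rearrangement of a vector in ℝⁿ. -/
noncomputable def dsort {n : ℕ} (u : Fin n → ℝ) : Fin n → ℝ :=
  u ∘ Tuple.sort (fun i => -u i)

/-- `Maj u v` : `u` is majorized by `v`. -/
def Maj {n : ℕ} (u v : Fin n → ℝ) : Prop :=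
  (∀ k : ℕ, ∑ i ∈ univ.filter (fun i : Fin n => (i : ℕ) < k), dsort u i ≤
      ∑ i ∈ univ.filter (fun i : Fin n => (i : ℕ) < k), dsort v i) ∧
  ∑ i, u i = ∑ i, v i

open Matrix

/-- Decreasingly ordered eigenvalue vector of a real symmetric matrix. -/
noncomputable def specVec {n : ℕ} {A : Matrix (Fin n) (Fin n) ℝ} (hA : A.IsHermitian) :
    Fin n → ℝ :=
  dsort hA.eigenvalues

/-- `A` and `B` strongly commute: a common orthonormal eigenbasis realizing both
decreasingly ordered spectra simultaneously. -/
def StrongCommute {n : ℕ} {A B : Matrix (Fin n) (Fin n) ℝ}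
    (hA : A.IsHermitian) (hB : B.IsHermitian) : Prop :=
  ∃ U : Matrix (Fin n) (Fin n) ℝ, U * Uᵀ = 1 ∧
    Uᵀ * A * U = Matrix.diagonal (specVec hA) ∧
    Uᵀ * B * U = Matrix.diagonal (specVec hB)

namespace Stmt18Aux

variable {n : ℕ}

lemma dsort_antitone (u : Fin n → ℝ) : Antitone (dsort u) := by
  intro i j hij
  have h := Tuple.monotone_sort (fun i => -u i) hij
  simp only [Function.comp_apply] at h
  simpa [dsort] using neg_le_neg_iff.mp h

lemma antitone_specVec {M : Matrix (Fin n) (Fin n) ℝ} (hM : M.IsHermitian) :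
    Antitone (specVec hM) := dsort_antitone _

lemma dsort_eq_of_antitone {u : Fin n → ℝ} (h : Antitone u) : dsort u = u := by
  have hm : Monotone (fun i => -u i) := fun i j hij => neg_le_neg (h hij)
  rw [dsort, Tuple.sort_eq_refl_iff_monotone.mpr hm]
  rfl

lemma sum_dsort (u : Fin n → ℝ) : ∑ i, dsort u i = ∑ i, u i :=
  Equiv.sum_comp (Tuple.sort fun i => -u i) u

/-- Abel-type bound: if `0 ≤ c ≤ 1` with `∑ c = |K|` where `K = {i < k}` and `d` is
antitone, then `∑ c i * d i ≤ ∑_{i ∈ K} d i`. -/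
lemma abel_bound (d c : Fin n → ℝ) (hd : Antitone d) (k : ℕ)
    (hc0 : ∀ i, 0 ≤ c i) (hc1 : ∀ i, c i ≤ 1)
    (hsum : ∑ i, c i = ((univ.filter (fun i : Fin n => (i : ℕ) < k)).card : ℝ)) :
    ∑ i, c i * d i ≤ ∑ i ∈ univ.filter (fun i : Fin n => (i : ℕ) < k), d i := by
  set K := univ.filter (fun i : Fin n => (i : ℕ) < k) with hK
  rcases K.eq_empty_or_nonempty with hKe | hKne
  · have h0 : ∑ i, c i = 0 := by rw [hsum, hKe]; simp
    have hz : ∀ i, c i = 0 := fun i =>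
      (Finset.sum_eq_zero_iff_of_nonneg (fun j _ => hc0 j)).mp h0 i (mem_univ i)
    simp [hKe, hz]
  · set m := K.inf' hKne d with hm
    have hmem : ∀ i ∈ K, m ≤ d i := fun i hi => Finset.inf'_le d hi
    have hout : ∀ i, i ∉ K → d i ≤ m := by
      intro i hi
      apply Finset.le_inf'
      intro j hj
      apply hd
      have hj' : (j : ℕ) < k := by simpa [hK] using hj
      have hi' : ¬ (i : ℕ) < k := by simpa [hK] using hi
      exact Fin.le_def.mpr (le_of_lt (lt_of_lt_of_le hj' (le_of_not_gt hi')))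
    have hsplit : ∑ i, c i * d i
        = ∑ i ∈ K, c i * d i + ∑ i ∈ univ.filter (fun i : Fin n => ¬ (i : ℕ) < k), c i * d i :=
      (Finset.sum_filter_add_sum_filter_not univ _ _).symm
    have hcsplit : ∑ i ∈ K, c i + ∑ i ∈ univ.filter (fun i : Fin n => ¬ (i : ℕ) < k), c i
        = (K.card : ℝ) := by
      rw [← hsum]
      exact Finset.sum_filter_add_sum_filter_not univ _ _
    have e1 : ∑ i ∈ K, c i * d i ≤ ∑ i ∈ K, (d i + (c i - 1) * m) := by
      apply Finset.sum_le_sum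
      intro i hi
      nlinarith [hmem i hi, hc1 i]
    have e2 : ∑ i ∈ univ.filter (fun i : Fin n => ¬ (i : ℕ) < k), c i * d i
        ≤ ∑ i ∈ univ.filter (fun i : Fin n => ¬ (i : ℕ) < k), c i * m := by
      apply Finset.sum_le_sum
      intro i hi
      have hiK : i ∉ K := by
        simp only [hK, mem_filter, mem_univ, true_and] at hi ⊢
        simpa using hi
      exact mul_le_mul_of_nonneg_left (hout i hiK) (hc0 i)
    have e3 : ∑ i ∈ K, (d i + (c i - 1) * m)
        = ∑ i ∈ K, d i + (∑ i ∈ K, c i - (K.card : ℝ)) * m := by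
      rw [Finset.sum_add_distrib, ← Finset.sum_mul, Finset.sum_sub_distrib,
        Finset.sum_const, nsmul_eq_mul, mul_one]
    have e4 : ∑ i ∈ univ.filter (fun i : Fin n => ¬ (i : ℕ) < k), c i * m
        = (∑ i ∈ univ.filter (fun i : Fin n => ¬ (i : ℕ) < k), c i) * m :=
      (Finset.sum_mul _ _ _).symm
    have e5 : (∑ i ∈ K, c i - (K.card : ℝ)) * m
        + (∑ i ∈ univ.filter (fun i : Fin n => ¬ (i : ℕ) < k), c i) * m = 0 := by
      linear_combination m * hcsplit
    linarith [e1, e2]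

lemma conj_diag_partial_le (d : Fin n → ℝ) (hd : Antitone d)
    (Q : Matrix (Fin n) (Fin n) ℝ) (h1 : Q * Qᵀ = 1) (h2 : Qᵀ * Q = 1) (k : ℕ) :
    ∑ i ∈ univ.filter (fun i : Fin n => (i : ℕ) < k), (Qᵀ * diagonal d * Q) i i
      ≤ ∑ i ∈ univ.filter (fun i : Fin n => (i : ℕ) < k), d i := by
  set K := univ.filter (fun i : Fin n => (i : ℕ) < k) with hK
  have hentry : ∀ i, (Qᵀ * diagonal d * Q) i i = ∑ j, Q j i ^ 2 * d j := by
    intro i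
    rw [Matrix.mul_apply]
    apply Finset.sum_congr rfl
    intro j _
    rw [Matrix.mul_diagonal, Matrix.transpose_apply]
    ring
  set c : Fin n → ℝ := fun j => ∑ i ∈ K, Q j i ^ 2 with hc
  have hrow : ∀ j, ∑ i, Q j i ^ 2 = 1 := by
    intro j
    have := congrFun (congrFun h1 j) j
    rw [Matrix.mul_apply] at this
    simp only [Matrix.transpose_apply] at this
    rw [Matrix.one_apply_eq] at this
    calc ∑ i, Q j i ^ 2 = ∑ i, Q j i * Q j i := by
          apply Finset.sum_congr rfl; intro i _; ring
      _ = 1 := this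
  have hcol : ∀ i, ∑ j, Q j i ^ 2 = 1 := by
    intro i
    have := congrFun (congrFun h2 i) i
    rw [Matrix.mul_apply] at this
    simp only [Matrix.transpose_apply] at this
    rw [Matrix.one_apply_eq] at this
    calc ∑ j, Q j i ^ 2 = ∑ j, Q j i * Q j i := by
          apply Finset.sum_congr rfl; intro j _; ring
      _ = 1 := this
  have hc0 : ∀ j, 0 ≤ c j := fun j => Finset.sum_nonneg (fun i _ => sq_nonneg _)
  have hc1 : ∀ j, c j ≤ 1 := by
    intro j
    calc c j ≤ ∑ i, Q j i ^ 2 :=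
          Finset.sum_le_sum_of_subset_of_nonneg (Finset.filter_subset _ _)
            (fun i _ _ => sq_nonneg _)
      _ = 1 := hrow j
  have hcsum : ∑ j, c j = (K.card : ℝ) := by
    rw [hc]
    rw [Finset.sum_comm]
    calc ∑ i ∈ K, ∑ j, Q j i ^ 2 = ∑ i ∈ K, (1 : ℝ) := by
          apply Finset.sum_congr rfl; intro i _; exact hcol i
      _ = (K.card : ℝ) := by simp
  calc ∑ i ∈ K, (Qᵀ * diagonal d * Q) i i
      = ∑ i ∈ K, ∑ j, Q j i ^ 2 * d j := by
        apply Finset.sum_congr rfl; intro i _; exact hentry i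
    _ = ∑ j, c j * d j := by
        rw [Finset.sum_comm]
        apply Finset.sum_congr rfl
        intro j _
        rw [hc, Finset.sum_mul]
    _ ≤ ∑ i ∈ K, d i := abel_bound d c hd k hc0 hc1 hcsum

lemma real_spectral {M : Matrix (Fin n) (Fin n) ℝ} (hM : M.IsHermitian) :
    ∃ V : Matrix (Fin n) (Fin n) ℝ, V * Vᵀ = 1 ∧ Vᵀ * V = 1 ∧
      M = V * diagonal hM.eigenvalues * Vᵀ := by
  refine ⟨(hM.eigenvectorUnitary : Matrix (Fin n) (Fin n) ℝ), ?_, ?_, ?_⟩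
  · have := (Matrix.mem_unitaryGroup_iff).mp hM.eigenvectorUnitary.2
    rwa [Matrix.star_eq_conjTranspose, Matrix.conjTranspose_eq_transpose_of_trivial] at this
  · have := (Matrix.mem_unitaryGroup_iff').mp hM.eigenvectorUnitary.2
    rwa [Matrix.star_eq_conjTranspose, Matrix.conjTranspose_eq_transpose_of_trivial] at this
  · have h := hM.spectral_theorem
    rwa [Unitary.conjStarAlgAut_apply, Matrix.star_eq_conjTranspose, Matrix.conjTranspose_eq_transpose_of_trivial,
      RCLike.ofReal_real_eq_id, Function.id_comp] at h

lemma exists_orth_diag {M : Matrix (Fin n) (Fin n) ℝ} (hM : M.IsHermitian) :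
    ∃ U : Matrix (Fin n) (Fin n) ℝ, U * Uᵀ = 1 ∧ Uᵀ * U = 1 ∧
      M = U * diagonal (specVec hM) * Uᵀ := by
  obtain ⟨V, hV1, hV2, hVM⟩ := real_spectral hM
  set σ := Tuple.sort (fun i => -(hM.eigenvalues i)) with hσ
  refine ⟨Matrix.of (fun i j => V i (σ j)), ?_, ?_, ?_⟩
  · ext i j
    rw [Matrix.mul_apply]
    simp only [Matrix.transpose_apply, Matrix.of_apply]
    calc ∑ k, V i (σ k) * V j (σ k) = ∑ k, V i k * V j k :=
          Equiv.sum_comp σ (fun k => V i k * V j k)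
      _ = (V * Vᵀ) i j := by rw [Matrix.mul_apply]; simp [Matrix.transpose_apply]
      _ = (1 : Matrix (Fin n) (Fin n) ℝ) i j := by rw [hV1]
  · ext i j
    rw [Matrix.mul_apply]
    simp only [Matrix.transpose_apply, Matrix.of_apply]
    have : ∑ k, V k (σ i) * V k (σ j) = (Vᵀ * V) (σ i) (σ j) := by
      rw [Matrix.mul_apply]; simp [Matrix.transpose_apply]
    rw [this, hV2]
    by_cases h : i = j
    · subst h; simp [Matrix.one_apply]
    · rw [Matrix.one_apply_ne (fun hc => h (σ.injective hc)), Matrix.one_apply_ne h]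
  · ext i j
    have hU2 : ∀ i k, (Matrix.of (fun i j => V i (σ j)) * diagonal (specVec hM)) i k
        = V i (σ k) * hM.eigenvalues (σ k) := by
      intro i k
      rw [Matrix.mul_diagonal, Matrix.of_apply]
      rfl
    rw [Matrix.mul_apply]
    simp only [hU2, Matrix.transpose_apply, Matrix.of_apply]
    calc M i j = (V * diagonal hM.eigenvalues * Vᵀ) i j := by rw [← hVM]
      _ = ∑ k, V i k * hM.eigenvalues k * V j k := by
          rw [Matrix.mul_apply]
          apply Finset.sum_congr rfl
          intro k _
          rw [Matrix.mul_diagonal, Matrix.transpose_apply]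
      _ = ∑ k, V i (σ k) * hM.eigenvalues (σ k) * V j (σ k) :=
          (Equiv.sum_comp σ (fun k => V i k * hM.eigenvalues k * V j k)).symm

lemma conj_cancel {W D : Matrix (Fin n) (Fin n) ℝ} (hW : Wᵀ * W = 1) :
    Wᵀ * (W * D * Wᵀ) * W = D := by
  calc Wᵀ * (W * D * Wᵀ) * W = (Wᵀ * W) * D * (Wᵀ * W) := by simp only [mul_assoc]
    _ = D := by rw [hW, one_mul, mul_one]

lemma psum_succ (g : Fin n → ℝ) (k : ℕ) (hk : k < n) :
    ∑ i ∈ univ.filter (fun i : Fin n => (i : ℕ) < k + 1), g i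
      = ∑ i ∈ univ.filter (fun i : Fin n => (i : ℕ) < k), g i + g ⟨k, hk⟩ := by
  have hins : univ.filter (fun i : Fin n => (i : ℕ) < k + 1)
      = insert ⟨k, hk⟩ (univ.filter (fun i : Fin n => (i : ℕ) < k)) := by
    ext i
    simp only [mem_filter, mem_univ, true_and, Finset.mem_insert, Fin.ext_iff]
    omega
  rw [hins, Finset.sum_insert (by simp)]
  ring

/-- If `M = U (diag d) Uᵀ` with `U` orthogonal and `d` antitone, then for any orthogonal
`W`, partial sums of diagonal entries of `Wᵀ M W` are dominated by those of `d`. -/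
lemma partial_conj_le {M U W : Matrix (Fin n) (Fin n) ℝ} {d : Fin n → ℝ}
    (hU1 : U * Uᵀ = 1) (hU2 : Uᵀ * U = 1) (hW1 : W * Wᵀ = 1) (hW2 : Wᵀ * W = 1)
    (hd : Antitone d) (hM : M = U * diagonal d * Uᵀ) (k : ℕ) :
    ∑ i ∈ univ.filter (fun i : Fin n => (i : ℕ) < k), (Wᵀ * M * W) i i
      ≤ ∑ i ∈ univ.filter (fun i : Fin n => (i : ℕ) < k), d i := by
  have hQ : Wᵀ * M * W = (Uᵀ * W)ᵀ * diagonal d * (Uᵀ * W) := by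
    rw [hM, Matrix.transpose_mul, Matrix.transpose_transpose]
    simp only [mul_assoc]
  rw [hQ]
  apply conj_diag_partial_le d hd (Uᵀ * W)
  · rw [Matrix.transpose_mul, Matrix.transpose_transpose]
    calc (Uᵀ * W) * (Wᵀ * U) = Uᵀ * (W * Wᵀ) * U := by simp only [mul_assoc]
      _ = 1 := by rw [hW1, mul_one, hU2]
  · rw [Matrix.transpose_mul, Matrix.transpose_transpose]
    calc (Wᵀ * U) * (Uᵀ * W) = Wᵀ * (U * Uᵀ) * W := by simp only [mul_assoc]
      _ = 1 := by rw [hU1, mul_one, hW2]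

lemma partial_le_of_two_diag {U W : Matrix (Fin n) (Fin n) ℝ} {d e : Fin n → ℝ}
    (hU1 : U * Uᵀ = 1) (hU2 : Uᵀ * U = 1) (hW1 : W * Wᵀ = 1) (hW2 : Wᵀ * W = 1)
    (hd : Antitone d)
    (heq : W * diagonal e * Wᵀ = U * diagonal d * Uᵀ) (k : ℕ) :
    ∑ i ∈ univ.filter (fun i : Fin n => (i : ℕ) < k), e i
      ≤ ∑ i ∈ univ.filter (fun i : Fin n => (i : ℕ) < k), d i := by
  have hdiagE : Wᵀ * (W * diagonal e * Wᵀ) * W = diagonal e := conj_cancel hW2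
  have key : ∀ i, e i = (Wᵀ * (W * diagonal e * Wᵀ) * W) i i := by
    intro i
    rw [hdiagE, Matrix.diagonal_apply_eq]
  calc ∑ i ∈ univ.filter (fun i : Fin n => (i : ℕ) < k), e i
      = ∑ i ∈ univ.filter (fun i : Fin n => (i : ℕ) < k),
          (Wᵀ * (W * diagonal e * Wᵀ) * W) i i := by
        apply Finset.sum_congr rfl; intro i _; exact key i
    _ ≤ ∑ i ∈ univ.filter (fun i : Fin n => (i : ℕ) < k), d i :=
        partial_conj_le hU1 hU2 hW1 hW2 hd heq k

lemma specVec_eq_of_diag {M : Matrix (Fin n) (Fin n) ℝ} (hM : M.IsHermitian)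
    {U : Matrix (Fin n) (Fin n) ℝ} {d : Fin n → ℝ}
    (h1 : U * Uᵀ = 1) (h2 : Uᵀ * U = 1) (hd : Antitone d)
    (hdiag : M = U * diagonal d * Uᵀ) : specVec hM = d := by
  obtain ⟨V, hV1, hV2, hVM⟩ := exists_orth_diag hM
  have hs : Antitone (specVec hM) := antitone_specVec hM
  have hVU : V * diagonal (specVec hM) * Vᵀ = U * diagonal d * Uᵀ := by
    rw [← hVM, ← hdiag]
  have hle1 : ∀ k, ∑ i ∈ univ.filter (fun i : Fin n => (i : ℕ) < k), specVec hM i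
      ≤ ∑ i ∈ univ.filter (fun i : Fin n => (i : ℕ) < k), d i :=
    fun k => partial_le_of_two_diag h1 h2 hV1 hV2 hd hVU k
  have hle2 : ∀ k, ∑ i ∈ univ.filter (fun i : Fin n => (i : ℕ) < k), d i
      ≤ ∑ i ∈ univ.filter (fun i : Fin n => (i : ℕ) < k), specVec hM i :=
    fun k => partial_le_of_two_diag hV1 hV2 h1 h2 hs hVU.symm k
  have heqk : ∀ k, ∑ i ∈ univ.filter (fun i : Fin n => (i : ℕ) < k), specVec hM i
      = ∑ i ∈ univ.filter (fun i : Fin n => (i : ℕ) < k), d i :=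
    fun k => le_antisymm (hle1 k) (hle2 k)
  funext i
  have ha := heqk i
  have hb := heqk (i + 1)
  rw [psum_succ (specVec hM) i i.isLt, psum_succ d i i.isLt] at hb
  have : specVec hM ⟨i, i.isLt⟩ = d ⟨i, i.isLt⟩ := by linarith
  simpa using this

lemma antitone_add {u v : Fin n → ℝ} (hu : Antitone u) (hv : Antitone v) :
    Antitone (u + v) := fun _ _ hab => add_le_add (hu hab) (hv hab)

lemma sum_specVec {M : Matrix (Fin n) (Fin n) ℝ} (hM : M.IsHermitian) :
    ∑ i, specVec hM i = Matrix.trace M := by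
  obtain ⟨U, hU1, hU2, hMd⟩ := exists_orth_diag hM
  conv_rhs => rw [hMd]
  rw [Matrix.trace_mul_comm, ← Matrix.mul_assoc, hU2, Matrix.one_mul,
    Matrix.trace_diagonal]

/-- Ky Fan's inequality. -/
lemma kyfan {X Y S : Matrix (Fin n) (Fin n) ℝ} (hX : X.IsHermitian) (hY : Y.IsHermitian)
    (hS : S.IsHermitian) (hsum : S = X + Y) :
    Maj (specVec hS) (specVec hX + specVec hY) := by
  constructor
  · intro k
    rw [dsort_eq_of_antitone (antitone_specVec hS),
      dsort_eq_of_antitone (antitone_add (antitone_specVec hX) (antitone_specVec hY))]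
    obtain ⟨W, hW1, hW2, hSd⟩ := exists_orth_diag hS
    obtain ⟨U, hU1, hU2, hXd⟩ := exists_orth_diag hX
    obtain ⟨V, hV1, hV2, hYd⟩ := exists_orth_diag hY
    have hdiagS : Wᵀ * S * W = diagonal (specVec hS) := by
      conv_lhs => rw [hSd]
      exact conj_cancel hW2
    have hkey : ∀ i, specVec hS i = (Wᵀ * X * W) i i + (Wᵀ * Y * W) i i := by
      intro i
      have : (Wᵀ * S * W) i i = specVec hS i := by rw [hdiagS, Matrix.diagonal_apply_eq]
      rw [← this, hsum]
      rw [Matrix.mul_add, Matrix.add_mul]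
      rfl
    calc ∑ i ∈ univ.filter (fun i : Fin n => (i : ℕ) < k), specVec hS i
        = ∑ i ∈ univ.filter (fun i : Fin n => (i : ℕ) < k), (Wᵀ * X * W) i i
          + ∑ i ∈ univ.filter (fun i : Fin n => (i : ℕ) < k), (Wᵀ * Y * W) i i := by
          rw [← Finset.sum_add_distrib]
          apply Finset.sum_congr rfl
          intro i _
          exact hkey i
      _ ≤ ∑ i ∈ univ.filter (fun i : Fin n => (i : ℕ) < k), specVec hX i
          + ∑ i ∈ univ.filter (fun i : Fin n => (i : ℕ) < k), specVec hY i :=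
          add_le_add
            (partial_conj_le hU1 hU2 hW1 hW2 (antitone_specVec hX) hXd k)
            (partial_conj_le hV1 hV2 hW1 hW2 (antitone_specVec hY) hYd k)
      _ = ∑ i ∈ univ.filter (fun i : Fin n => (i : ℕ) < k),
            (specVec hX + specVec hY) i := by
          rw [← Finset.sum_add_distrib]
          rfl
  · have : ∑ i, (specVec hX + specVec hY) i = ∑ i, specVec hX i + ∑ i, specVec hY i := by
      rw [← Finset.sum_add_distrib]
      rfl
    rw [this, sum_specVec hS, sum_specVec hX, sum_specVec hY, hsum, Matrix.trace_add]

end Stmt18Aux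

open Stmt18Aux

theorem stmt18 {n : ℕ} {A B Xbar : Matrix (Fin n) (Fin n) ℝ}
    (hA : A.IsHermitian) (hB : B.IsHermitian) (hXbar : Xbar.IsHermitian)
    (f : (Fin n → ℝ) → ℝ)
    (hsymm : ∀ (σ : Equiv.Perm (Fin n)) (u : Fin n → ℝ), f (u ∘ σ) = f u)
    (hschur : ∀ u v : Fin n → ℝ, Maj u v → dsort u ≠ dsort v → f u < f v)
    (hspec : specVec hXbar = specVec hB)
    (hmax : ∀ (X : Matrix (Fin n) (Fin n) ℝ) (hX : X.IsHermitian),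
      specVec hX = specVec hB →
      f (specVec (hX.sub hA)) ≤ f (specVec (hXbar.sub hA))) :
    specVec (hXbar.sub hA) = specVec hXbar + specVec hA.neg := by
  obtain ⟨U, hU1, hU2, hAd⟩ := exists_orth_diag hA.neg
  set sX := specVec hXbar with hsX
  set sA := specVec hA.neg with hsA
  -- the competitor
  set Xh := U * diagonal sX * Uᵀ with hXh
  have hXhherm : Xh.IsHermitian := by
    have : Xhᵀ = Xh := by
      rw [hXh, Matrix.transpose_mul, Matrix.transpose_mul, Matrix.transpose_transpose,
        Matrix.diagonal_transpose, Matrix.mul_assoc]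
    rw [Matrix.IsHermitian, Matrix.conjTranspose_eq_transpose_of_trivial, this]
  have hXhspec : specVec hXhherm = sX :=
    specVec_eq_of_diag hXhherm hU1 hU2 (antitone_specVec hXbar) hXh
  have hAneg : A = -(U * diagonal sA * Uᵀ) := by
    rw [← hAd, neg_neg]
  have hDD : diagonal (sX + sA) = diagonal sX + diagonal sA := by
    rw [Matrix.diagonal_add]
    rfl
  have hdiff : Xh - A = U * diagonal (sX + sA) * Uᵀ := by
    rw [hXh, hAneg, sub_neg_eq_add, hDD, Matrix.mul_add, Matrix.add_mul]
  have hanti : Antitone (sX + sA) :=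
    antitone_add (antitone_specVec hXbar) (antitone_specVec hA.neg)
  have hspec2 : specVec (hXhherm.sub hA) = sX + sA :=
    specVec_eq_of_diag (hXhherm.sub hA) hU1 hU2 hanti hdiff
  have hmax' := hmax Xh hXhherm (hXhspec.trans hspec)
  rw [hspec2] at hmax'
  have hmaj : Maj (specVec (hXbar.sub hA)) (sX + sA) := by
    have hXA : Xbar - A = Xbar + (-A) := sub_eq_add_neg _ _
    exact kyfan hXbar hA.neg (hXbar.sub hA) hXA
  by_contra hne
  have hne' : dsort (specVec (hXbar.sub hA)) ≠ dsort (sX + sA) := by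
    rw [dsort_eq_of_antitone (antitone_specVec (hXbar.sub hA)),
      dsort_eq_of_antitone hanti]
    exact hne
  exact absurd (hschur _ _ hmaj hne') (not_lt.mpr hmax')
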